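/- The function $g:(0,\infty)\to[0,\infty)$ defined by $g(z) = -\ln z$ for $z \in (0,\bar c]$, $g(z) = (z-1)^2/(2\bar c(1-\bar c))$ for $z \in (\bar c, 1]$, and $g(z)=0$ for $z > 1$, is continuously differentiable, convex, and non-increasing, where $\bar c \in [1/4,1/3]$ is the smallest solution of $2c\ln(1/c)=1-c$. -/

import Mathlib

/-- The function `g : (0,∞) → [0,∞)` defined by `g z = -ln z` for `z ∈ (0, c̄]`,
`g z = (z-1)^2 / (2 c̄ (1 - c̄))` for `z ∈ (c̄, 1]` and `g z = 0` for `z > 1`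
is continuously differentiable, convex and non-increasing on `(0,∞)`,
where `c̄ ∈ [1/4, 1/3]` is the smallest positive solution of `2c ln(1/c) = 1 - c`. -/
theorem stmt_1 (cbar : ℝ)
    (hpos : 0 < cbar)
    (hsol : 2 * cbar * Real.log (1 / cbar) = 1 - cbar)
    (hmin : ∀ c : ℝ, 0 < c → 2 * c * Real.log (1 / c) = 1 - c → cbar ≤ c)
    (hcbar : cbar ∈ Set.Icc (1 / 4 : ℝ) (1 / 3))
    (g : ℝ → ℝ)
    (hg : ∀ z : ℝ, g z =
      if z ≤ cbar then -Real.log z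
      else if z ≤ 1 then (z - 1) ^ 2 / (2 * cbar * (1 - cbar))
      else 0)
    (hrange : ∀ z : ℝ, 0 < z → 0 ≤ g z) :
    ContDiffOn ℝ 1 g (Set.Ioi (0 : ℝ)) ∧
      ConvexOn ℝ (Set.Ioi (0 : ℝ)) g ∧
      AntitoneOn g (Set.Ioi (0 : ℝ)) := by
  have hc1 : cbar < 1 := lt_of_le_of_lt hcbar.2 (by norm_num)
  have hc0 : (0:ℝ) < 1 - cbar := by linarith
  have hd : (0:ℝ) < cbar * (1 - cbar) := mul_pos hpos hc0
  have hcne : cbar ≠ 0 := ne_of_gt hpos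
  have hc1ne : (1:ℝ) - cbar ≠ 0 := ne_of_gt hc0
  -- log value match at cbar
  have hlog : -Real.log cbar = (cbar - 1) ^ 2 / (2 * cbar * (1 - cbar)) := by
    rw [one_div, Real.log_inv] at hsol
    have h1 : -Real.log cbar = (1 - cbar) / (2 * cbar) := by
      field_simp
      linarith [hsol]
    rw [h1]
    field_simp
    ring
  -- derivative match at cbar
  have hder_match : -cbar⁻¹ = (cbar - 1) / (cbar * (1 - cbar)) := by
    field_simp
    ring
  -- the quadratic piece
  set q : ℝ → ℝ := fun z => (z - 1) ^ 2 / (2 * cbar * (1 - cbar)) with hq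
  have hqder : ∀ z : ℝ, HasDerivAt q ((z - 1) / (cbar * (1 - cbar))) z := by
    intro z
    have h1 : HasDerivAt (fun z : ℝ => (z - 1) ^ 2) (2 * (z - 1)) z := by
      simpa [Pi.pow_def] using ((hasDerivAt_id z).sub_const 1).pow 2
    have h2 : HasDerivAt q _ z := h1.div_const (2 * cbar * (1 - cbar))
    convert h2 using 1
    field_simp
  -- the derivative function
  set g' : ℝ → ℝ := fun z =>
    if z ≤ cbar then -z⁻¹ else if z ≤ 1 then (z - 1) / (cbar * (1 - cbar)) else 0 with hg'
  -- auxiliary continuous function for the region z > cbar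
  set h : ℝ → ℝ := fun z => if z ≤ 1 then (z - 1) / (cbar * (1 - cbar)) else 0 with hh
  have hcont : Continuous h := by
    apply Continuous.if_le
    · exact (continuous_id.sub continuous_const).div_const _
    · exact continuous_const
    · exact continuous_id
    · exact continuous_const
    · intro x hx; simp [hx]
  have hgh : ∀ z : ℝ, ¬ z ≤ cbar → g' z = h z := by
    intro z hz; simp only [hg', hh, if_neg hz]
  have hg'cbar : g' cbar = -cbar⁻¹ := by simp [hg']
  have hhcbar : h cbar = -cbar⁻¹ := by
    simp only [hh, if_pos hc1.le]
    rw [hder_match]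
  -- g has derivative g' on (0, ∞)
  have hder : ∀ x ∈ Set.Ioi (0:ℝ), HasDerivAt g (g' x) x := by
    intro x hx
    simp only [Set.mem_Ioi] at hx
    rcases lt_trichotomy x cbar with hxc | hxc | hxc
    · -- x < cbar : g = -log near x
      have hev : g =ᶠ[nhds x] (fun z => -Real.log z) := by
        filter_upwards [Iio_mem_nhds hxc] with z hz
        rw [hg z, if_pos (le_of_lt hz)]
      have : HasDerivAt (fun z => -Real.log z) (-x⁻¹) x :=
        (Real.hasDerivAt_log (ne_of_gt hx)).neg
      have := this.congr_of_eventuallyEq hev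
      simpa [hg', if_pos hxc.le] using this
    · -- x = cbar : glue
      subst hxc
      have hL : HasDerivWithinAt g (-x⁻¹) (Set.Iic x) x := by
        refine HasDerivWithinAt.congr
          ((Real.hasDerivAt_log (ne_of_gt hx)).neg.hasDerivWithinAt) ?_ ?_
        · intro y hy; rw [hg y, if_pos (Set.mem_Iic.mp hy)]; rfl
        · rw [hg x, if_pos le_rfl]; rfl
      have hR : HasDerivWithinAt g (-x⁻¹) (Set.Icc x 1) x := by
        have hq' : HasDerivWithinAt q (-x⁻¹) (Set.Icc x 1) x := by
          have := (hqder x).hasDerivWithinAt (s := Set.Icc x 1)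
          rwa [← hder_match] at this
        refine hq'.congr ?_ ?_
        · intro y hy
          rcases eq_or_lt_of_le hy.1 with h1 | h1
          · rw [hg y, ← h1, if_pos le_rfl]
            simpa [hq] using hlog
          · rw [hg y, if_neg (not_le.mpr h1), if_pos hy.2]
        · rw [hg x, if_pos le_rfl]
          simpa [hq] using hlog
      have := (hL.union hR).hasDerivAt (by
        rw [Set.Iic_union_Icc_eq_Iic hc1.le]
        exact Iic_mem_nhds hc1)
      simpa [hg', if_pos (le_refl x)] using this
    · -- x > cbar
      rcases lt_trichotomy x 1 with hx1 | hx1 | hx1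
      · -- cbar < x < 1 : g = q near x
        have hev : g =ᶠ[nhds x] q := by
          filter_upwards [Ioo_mem_nhds hxc hx1] with z hz
          rw [hg z, if_neg (not_le.mpr hz.1), if_pos hz.2.le]
        have := (hqder x).congr_of_eventuallyEq hev
        simpa [hg', if_neg (not_le.mpr hxc), if_pos hx1.le] using this
      · -- x = 1 : glue
        subst hx1
        have hL : HasDerivWithinAt g 0 (Set.Icc cbar 1) 1 := by
          have hq' : HasDerivWithinAt q 0 (Set.Icc cbar 1) 1 := by
            have := (hqder 1).hasDerivWithinAt (s := Set.Icc cbar 1)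
            simpa using this
          refine hq'.congr ?_ ?_
          · intro y hy
            rcases eq_or_lt_of_le hy.1 with h1 | h1
            · rw [hg y, ← h1, if_pos le_rfl]
              simpa [hq] using hlog
            · rw [hg y, if_neg (not_le.mpr h1), if_pos hy.2]
          · rw [hg 1, if_neg (not_le.mpr hc1), if_pos le_rfl]
        have hR : HasDerivWithinAt g 0 (Set.Ici 1) 1 := by
          refine (hasDerivWithinAt_const 1 (Set.Ici 1) (0:ℝ)).congr ?_ ?_
          · intro y hy
            rcases eq_or_lt_of_le (Set.mem_Ici.mp hy) with h1 | h1
            · rw [hg y, ← h1, if_neg (not_le.mpr hc1), if_pos le_rfl]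
              simp
            · rw [hg y, if_neg (by linarith : ¬ y ≤ cbar), if_neg (not_le.mpr h1)]
          · rw [hg 1, if_neg (not_le.mpr hc1), if_pos le_rfl]
            simp
        have := (hL.union hR).hasDerivAt (by
          rw [Set.Icc_union_Ici_eq_Ici hc1.le]
          exact Ici_mem_nhds hxc)
        simpa [hg', if_neg (not_le.mpr hxc), if_pos (le_refl (1:ℝ))] using this
      · -- x > 1 : g = 0 near x
        have hev : g =ᶠ[nhds x] (fun _ => (0:ℝ)) := by
          filter_upwards [Ioi_mem_nhds hx1] with z hz
          rw [hg z, if_neg (by linarith [Set.mem_Ioi.mp hz] : ¬ z ≤ cbar),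
            if_neg (not_le.mpr hz)]
        have := (hasDerivAt_const x (0:ℝ)).congr_of_eventuallyEq hev
        simpa [hg', if_neg (not_le.mpr hxc), if_neg (not_le.mpr hx1)] using this
  have hdiff : DifferentiableOn ℝ g (Set.Ioi 0) :=
    fun x hx => ((hder x hx).differentiableAt).differentiableWithinAt
  have hgcont : ContinuousOn g (Set.Ioi 0) := hdiff.continuousOn
  have hderiv_eq : ∀ x ∈ Set.Ioi (0:ℝ), deriv g x = g' x :=
    fun x hx => (hder x hx).deriv
  -- continuity of g'
  have hg'cont : ContinuousOn g' (Set.Ioi 0) := by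
    intro x hx
    simp only [Set.mem_Ioi] at hx
    rcases lt_trichotomy x cbar with hxc | hxc | hxc
    · have hev : g' =ᶠ[nhds x] (fun z => -z⁻¹) := by
        filter_upwards [Iio_mem_nhds hxc] with z hz
        simp [hg', if_pos (le_of_lt (Set.mem_Iio.mp hz))]
      have : ContinuousAt (fun z : ℝ => -z⁻¹) x :=
        (continuousAt_inv₀ (ne_of_gt hx)).neg
      exact (this.congr hev.symm).continuousWithinAt
    · subst hxc
      have hL : ContinuousWithinAt g' (Set.Iic x) x := by
        refine ContinuousWithinAt.congr
          (((continuousAt_inv₀ (ne_of_gt hx)).neg).continuousWithinAt) ?_ ?_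
        · intro y hy; simp [hg', if_pos (Set.mem_Iic.mp hy)]
        · exact hg'cbar
      have hR : ContinuousWithinAt g' (Set.Ici x) x := by
        refine ContinuousWithinAt.congr (hcont.continuousWithinAt) ?_ ?_
        · intro y hy
          rcases eq_or_lt_of_le (Set.mem_Ici.mp hy) with h1 | h1
          · rw [← h1, hg'cbar, hhcbar]
          · exact hgh y (not_le.mpr h1)
        · rw [hg'cbar, hhcbar]
      have := hL.union hR
      rw [Set.Iic_union_Ici] at this
      exact (this.mono (Set.subset_univ _))
    · have hev : g' =ᶠ[nhds x] h := by
        filter_upwards [Ioi_mem_nhds hxc] with z hz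
        exact hgh z (not_le.mpr (Set.mem_Ioi.mp hz))
      exact ((hcont.continuousAt).congr hev.symm).continuousWithinAt
  -- g' is monotone on (0, ∞)
  have hmono : MonotoneOn g' (Set.Ioi (0:ℝ)) := by
    intro x hx y hy hxy
    simp only [Set.mem_Ioi] at hx hy
    simp only [hg']
    rcases le_or_gt x cbar with h1 | h1
    · rw [if_pos h1]
      rcases le_or_gt y cbar with h2 | h2
      · rw [if_pos h2]
        exact neg_le_neg (inv_anti₀ hx hxy)
      · rw [if_neg (not_le.mpr h2)]
        rcases le_or_gt y 1 with h3 | h3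
        · rw [if_pos h3]
          have e1 : -x⁻¹ ≤ -cbar⁻¹ := neg_le_neg (inv_anti₀ hx h1)
          have e2 : (cbar - 1) / (cbar * (1 - cbar)) ≤ (y - 1) / (cbar * (1 - cbar)) :=
            (div_le_div_iff_of_pos_right hd).mpr (by linarith)
          calc -x⁻¹ ≤ -cbar⁻¹ := e1
            _ = (cbar - 1) / (cbar * (1 - cbar)) := hder_match
            _ ≤ (y - 1) / (cbar * (1 - cbar)) := e2
        · rw [if_neg (not_le.mpr h3)]
          have : (0:ℝ) ≤ x⁻¹ := inv_nonneg.mpr hx.le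
          linarith
    · rw [if_neg (not_le.mpr h1), if_neg (not_le.mpr (lt_of_lt_of_le h1 hxy))]
      rcases le_or_gt x 1 with h3 | h3
      · rw [if_pos h3]
        rcases le_or_gt y 1 with h4 | h4
        · rw [if_pos h4]
          exact (div_le_div_iff_of_pos_right hd).mpr (by linarith)
        · rw [if_neg (not_le.mpr h4)]
          exact div_nonpos_iff.mpr (Or.inr ⟨by linarith, hd.le⟩)
      · rw [if_neg (not_le.mpr h3), if_neg (not_le.mpr (lt_of_lt_of_le h3 hxy))]
  -- g' is nonpositive on (0, ∞)
  have hnonpos : ∀ x ∈ Set.Ioi (0:ℝ), g' x ≤ 0 := by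
    intro x hx
    simp only [Set.mem_Ioi] at hx
    simp only [hg']
    split_ifs with h1 h2
    · have : (0:ℝ) ≤ x⁻¹ := inv_nonneg.mpr hx.le
      linarith
    · exact div_nonpos_iff.mpr (Or.inr ⟨by linarith, hd.le⟩)
    · exact le_refl 0
  refine ⟨?_, ?_, ?_⟩
  · rw [show (1 : WithTop ℕ∞) = 0 + 1 from rfl,
      contDiffOn_succ_iff_deriv_of_isOpen isOpen_Ioi]
    refine ⟨hdiff, by simp, ?_⟩
    rw [contDiffOn_zero]
    exact hg'cont.congr hderiv_eq
  · refine MonotoneOn.convexOn_of_deriv (convex_Ioi 0) hgcont ?_ ?_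
    · rwa [interior_Ioi]
    · rw [interior_Ioi]
      intro a ha b hb hab
      rw [hderiv_eq a ha, hderiv_eq b hb]
      exact hmono ha hb hab
  · refine antitoneOn_of_deriv_nonpos (convex_Ioi 0) hgcont ?_ ?_
    · rwa [interior_Ioi]
    · intro x hx
      rw [interior_Ioi] at hx
      rw [hderiv_eq x hx]
      exact hnonpos x hx
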